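/- arXiv:2307.04302 — 3 statements merged into one kernel-verified Lean document; each statement's English description precedes it below -/
import Mathlib

section
/- For the greedy algorithm with item supply clipping parameter 1/2, and for any agent subset S ⊆ [n], the revenue earned per item when running on S is at most twice the revenue earned per item when running on all agents: for every item j, W_j(x^S) ≤ 2·W_j(x), where W_j(z) denotes the sum of w_{ij} z_{ij} over agents i with z_{ij} > 0. -/
open Classical in
/-- One step of the greedy algorithm for unit-demand agents with supply clipping 1/2:
when pair `(i,j)` is processed (and `i` belongs to the active set `S`), if agent `i`
has bought nothing yet and the remaining fraction of item `j` exceeds `1/2`, she buys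
`min (remaining) (B i / w i j)` of item `j`. -/
noncomputable def gstep (n m : ℕ) (w : Fin n → Fin m → ℝ) (B : Fin n → ℝ)
    (S : Finset (Fin n)) (x : Fin n → Fin m → ℝ) (pr : Fin n × Fin m) :
    Fin n → Fin m → ℝ :=
  if pr.1 ∈ S ∧ (∀ j', x pr.1 j' = 0) ∧ 1 / 2 < 1 - ∑ i', x i' pr.2 then
    fun i j =>
      if i = pr.1 ∧ j = pr.2 then
        min (1 - ∑ i', x i' pr.2) (B pr.1 / w pr.1 pr.2)
      else x i j
  else x

/-- The greedy algorithm run on the active agent set `S`, processing the agent-item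
pairs in the order given by the list `L` (decreasing weights), starting from the empty
allocation. -/
noncomputable def grun (n m : ℕ) (w : Fin n → Fin m → ℝ) (B : Fin n → ℝ)
    (S : Finset (Fin n)) (L : List (Fin n × Fin m)) : Fin n → Fin m → ℝ :=
  L.foldl (gstep n m w B S) (fun _ _ => 0)

open Classical in
/-- The revenue attributed to item `j` in allocation `z`: `Σ_{i : z i j > 0} w i j * z i j`. -/
noncomputable def Wj (n m : ℕ) (w : Fin n → Fin m → ℝ) (z : Fin n → Fin m → ℝ)
    (j : Fin m) : ℝ :=
  ∑ i ∈ Finset.univ.filter (fun i => 0 < z i j), w i j * z i j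

structure GInv (n m : ℕ) (w : Fin n → Fin m → ℝ) (S : Finset (Fin n)) (c : ℝ)
    (xS xF : Fin n → Fin m → ℝ) : Prop where
  nS : ∀ i j, 0 ≤ xS i j
  nF : ∀ i j, 0 ≤ xF i j
  emp : ∀ i ∈ S, (∀ j', xS i j' = 0) → (∀ j', xF i j' = 0)
  le1 : ∀ j, (∑ i, xS i j) ≤ 1
  dom : ∀ j, (∑ i, xS i j) ≤ (∑ i, xF i j) ∨ 1/2 ≤ (∑ i, xF i j)
  rev : ∀ j, (∑ i, w i j * xS i j) + c * (1 - ∑ i, xS i j)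
        ≤ 2 * (∑ i, w i j * xF i j) + 2 * c * max 0 (1/2 - ∑ i, xF i j)

lemma gstep_pos (n m : ℕ) (w : Fin n → Fin m → ℝ) (B : Fin n → ℝ)
    (S : Finset (Fin n)) (x : Fin n → Fin m → ℝ) (i : Fin n) (j : Fin m)
    (h : i ∈ S ∧ (∀ j', x i j' = 0) ∧ 1 / 2 < 1 - ∑ i', x i' j) :
    gstep n m w B S x (i, j) =
      fun i' j' => if i' = i ∧ j' = j then min (1 - ∑ i'', x i'' j) (B i / w i j)
        else x i' j' := by
  unfold gstep
  split_ifs with hc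
  · rfl
  · exact absurd h hc

lemma gstep_neg (n m : ℕ) (w : Fin n → Fin m → ℝ) (B : Fin n → ℝ)
    (S : Finset (Fin n)) (x : Fin n → Fin m → ℝ) (i : Fin n) (j : Fin m)
    (h : ¬(i ∈ S ∧ (∀ j', x i j' = 0) ∧ 1 / 2 < 1 - ∑ i', x i' j)) :
    gstep n m w B S x (i, j) = x := by
  unfold gstep
  split_ifs with hc
  · exact absurd hc h
  · rfl

lemma sum_update {n : ℕ} (x : Fin n → ℝ) (g : Fin n → ℝ) (i : Fin n) (a : ℝ)
    (h0 : x i = 0) :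
    ∑ i', g i' * (if i' = i then a else x i') = g i * a + ∑ i', g i' * x i' := by
  have h : ∀ i', g i' * (if i' = i then a else x i')
      = (if i' = i then g i * a else 0) + g i' * x i' := by
    intro i'
    by_cases hi : i' = i
    · subst hi; simp [h0]
    · simp [hi]
  rw [Finset.sum_congr rfl fun i' _ => h i', Finset.sum_add_distrib,
    Finset.sum_ite_eq' Finset.univ i fun _ => g i * a]
  simp

lemma sum_update' {n : ℕ} (x : Fin n → ℝ) (i : Fin n) (a : ℝ)
    (h0 : x i = 0) :
    ∑ i', (if i' = i then a else x i') = a + ∑ i', x i' := by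
  have := sum_update x (fun _ => 1) i a h0
  simpa using this

lemma GInv.mono {n m : ℕ} {w : Fin n → Fin m → ℝ} {S : Finset (Fin n)} {c : ℝ}
    {xS xF : Fin n → Fin m → ℝ} (h : GInv n m w S c xS xF) {c' : ℝ}
    (h0 : 0 ≤ c') (hc : c' ≤ c) : GInv n m w S c' xS xF := by
  refine ⟨h.nS, h.nF, h.emp, h.le1, h.dom, fun j => ?_⟩
  have hrev := h.rev j
  have hle1 := h.le1 j
  have hsF : (0:ℝ) ≤ ∑ i, xF i j := Finset.sum_nonneg fun i _ => h.nF i j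
  have key : max 0 (1/2 - ∑ i, xF i j) ≤ (1 - ∑ i, xS i j) / 2 := by
    rcases h.dom j with hd | hd
    · exact max_le (by linarith) (by linarith)
    · exact max_le (by linarith) (by linarith)
  have h1 : (c - c') * max 0 (1/2 - ∑ i, xF i j)
      ≤ (c - c') * ((1 - ∑ i, xS i j) / 2) :=
    mul_le_mul_of_nonneg_left key (by linarith)
  nlinarith [h1, hrev]

lemma sum_lam_eq {n m : ℕ} (x : Fin n → Fin m → ℝ) (i : Fin n) (j : Fin m) (a : ℝ)
    (h0 : x i j = 0) :
    ∑ i', (if i' = i ∧ j = j then a else x i' j) = a + ∑ i', x i' j := by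
  simp only [and_true]
  exact sum_update' (fun i' => x i' j) i a h0

lemma sum_lam_eq_w {n m : ℕ} (w : Fin n → Fin m → ℝ) (x : Fin n → Fin m → ℝ)
    (i : Fin n) (j : Fin m) (a : ℝ) (h0 : x i j = 0) :
    ∑ i', w i' j * (if i' = i ∧ j = j then a else x i' j)
      = w i j * a + ∑ i', w i' j * x i' j := by
  simp only [and_true]
  exact sum_update (fun i' => x i' j) (fun i' => w i' j) i a h0

lemma sum_lam_ne {n m : ℕ} (x : Fin n → Fin m → ℝ) (i : Fin n) (j k : Fin m) (a : ℝ)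
    (hk : k ≠ j) :
    ∑ i', (if i' = i ∧ k = j then a else x i' k) = ∑ i', x i' k := by
  apply Finset.sum_congr rfl; intro i' _; simp [hk]

lemma sum_lam_ne_w {n m : ℕ} (w : Fin n → Fin m → ℝ) (x : Fin n → Fin m → ℝ)
    (i : Fin n) (j k : Fin m) (a : ℝ) (hk : k ≠ j) :
    ∑ i', w i' k * (if i' = i ∧ k = j then a else x i' k) = ∑ i', w i' k * x i' k := by
  apply Finset.sum_congr rfl; intro i' _; simp [hk]

lemma credit_step (sF aF : ℝ) (haF : 0 ≤ aF) :
    max 0 (1/2 - sF) ≤ aF + max 0 (1/2 - (aF + sF)) := by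
  apply max_le
  · have := le_max_left (0:ℝ) (1/2 - (aF + sF)); linarith
  · have := le_max_right (0:ℝ) (1/2 - (aF + sF)); linarith

lemma step_lemma {n m : ℕ} (w : Fin n → Fin m → ℝ) (B : Fin n → ℝ)
    (hw : ∀ i j, 0 < w i j) (hB : ∀ i, 0 < B i) (S : Finset (Fin n))
    (i : Fin n) (j : Fin m) (xS xF : Fin n → Fin m → ℝ)
    (h : GInv n m w S (w i j) xS xF) :
    GInv n m w S (w i j) (gstep n m w B S xS (i, j))
      (gstep n m w B Finset.univ xF (i, j)) := by
  have hc : 0 < w i j := hw i j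
  have hq : 0 < B i / w i j := div_pos (hB i) hc
  have hsS0 : (0:ℝ) ≤ ∑ i', xS i' j := Finset.sum_nonneg fun i' _ => h.nS i' j
  have hsF0 : (0:ℝ) ≤ ∑ i', xF i' j := Finset.sum_nonneg fun i' _ => h.nF i' j
  by_cases hCS : i ∈ S ∧ (∀ j', xS i j' = 0) ∧ 1 / 2 < 1 - ∑ i', xS i' j
  · obtain ⟨hiS, hS0, hSr⟩ := hCS
    rw [gstep_pos n m w B S xS i j ⟨hiS, hS0, hSr⟩]
    set aS := min (1 - ∑ i'', xS i'' j) (B i / w i j) with haS_def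
    have haS : 0 < aS := lt_min (by linarith) hq
    have haS1 : aS ≤ 1 - ∑ i', xS i' j := min_le_left _ _
    by_cases hCF : i ∈ (Finset.univ : Finset (Fin n)) ∧ (∀ j', xF i j' = 0) ∧
        1 / 2 < 1 - ∑ i', xF i' j
    · -- Case A : both buy
      obtain ⟨-, hF0, hFr⟩ := hCF
      rw [gstep_pos n m w B Finset.univ xF i j ⟨Finset.mem_univ i, hF0, hFr⟩]
      set aF := min (1 - ∑ i'', xF i'' j) (B i / w i j) with haF_def
      have haF : 0 < aF := lt_min (by linarith) hq
      have haF1 : aF ≤ 1 - ∑ i', xF i' j := min_le_left _ _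
      have hss : (∑ i', xS i' j) ≤ ∑ i', xF i' j := by
        rcases h.dom j with hd | hd
        · exact hd
        · linarith
      refine ⟨?_, ?_, ?_, ?_, ?_, ?_⟩
      · intro i' j'; split_ifs
        · linarith
        · exact h.nS i' j'
      · intro i' j'; split_ifs
        · linarith
        · exact h.nF i' j'
      · intro i₀ hi₀ hz j'
        by_cases hi : i₀ = i
        · exfalso
          have := hz j
          rw [if_pos ⟨hi, rfl⟩] at this
          linarith
        · have hz' : ∀ j'', xS i₀ j'' = 0 := by
            intro j''
            have := hz j''
            rwa [if_neg (by simp [hi])] at this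
          have hF := h.emp i₀ hi₀ hz'
          rw [if_neg (by simp [hi])]
          exact hF j'
      · intro k
        by_cases hk : k = j
        · subst hk
          rw [sum_lam_eq xS i k aS (hS0 k)]
          linarith
        · rw [sum_lam_ne xS i j k aS hk]
          exact h.le1 k
      · intro k
        by_cases hk : k = j
        · subst hk
          rw [sum_lam_eq xS i k aS (hS0 k), sum_lam_eq xF i k aF (hF0 k)]
          left
          rcases min_cases (1 - ∑ i'', xS i'' k) (B i / w i k) with ⟨e, he⟩ | ⟨e, he⟩ <;>
            rcases min_cases (1 - ∑ i'', xF i'' k) (B i / w i k) with ⟨e2, he2⟩ | ⟨e2, he2⟩ <;>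
            rw [haS_def, haF_def, e, e2] <;> linarith
        · rw [sum_lam_ne xS i j k aS hk, sum_lam_ne xF i j k aF hk]
          exact h.dom k
      · intro k
        by_cases hk : k = j
        · subst hk
          rw [sum_lam_eq xS i k aS (hS0 k), sum_lam_eq xF i k aF (hF0 k),
            sum_lam_eq_w w xS i k aS (hS0 k), sum_lam_eq_w w xF i k aF (hF0 k)]
          have hrev := h.rev k
          have hM := credit_step (∑ i', xF i' k) aF (le_of_lt haF)
          have h2 : w i k * max 0 (1/2 - ∑ i', xF i' k)
              ≤ w i k * (aF + max 0 (1/2 - (aF + ∑ i', xF i' k))) :=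
            mul_le_mul_of_nonneg_left hM (le_of_lt hc)
          nlinarith [hrev, h2]
        · rw [sum_lam_ne xS i j k aS hk, sum_lam_ne xF i j k aF hk,
            sum_lam_ne_w w xS i j k aS hk, sum_lam_ne_w w xF i j k aF hk]
          exact h.rev k
    · -- Case B : only S buys; then the full run has already sold ≥ 1/2 of j
      have hF0 : ∀ j', xF i j' = 0 := h.emp i hiS hS0
      have hFhalf : 1/2 ≤ ∑ i', xF i' j := by
        by_contra hcon
        exact hCF ⟨Finset.mem_univ i, hF0, by push_neg at hcon; linarith⟩
      rw [gstep_neg n m w B Finset.univ xF i j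
        (by intro hc'; exact absurd hc'.2.2 (by linarith))]
      refine ⟨?_, h.nF, ?_, ?_, ?_, ?_⟩
      · intro i' j'; split_ifs
        · linarith
        · exact h.nS i' j'
      · intro i₀ hi₀ hz j'
        by_cases hi : i₀ = i
        · exfalso
          have := hz j
          rw [if_pos ⟨hi, rfl⟩] at this
          linarith
        · have hz' : ∀ j'', xS i₀ j'' = 0 := by
            intro j''
            have := hz j''
            rwa [if_neg (by simp [hi])] at this
          exact h.emp i₀ hi₀ hz' j'
      · intro k
        by_cases hk : k = j
        · subst hk
          rw [sum_lam_eq xS i k aS (hS0 k)]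
          linarith
        · rw [sum_lam_ne xS i j k aS hk]
          exact h.le1 k
      · intro k
        by_cases hk : k = j
        · subst hk; right; exact hFhalf
        · rw [sum_lam_ne xS i j k aS hk]
          exact h.dom k
      · intro k
        by_cases hk : k = j
        · subst hk
          rw [sum_lam_eq xS i k aS (hS0 k), sum_lam_eq_w w xS i k aS (hS0 k)]
          have hrev := h.rev k
          have hM0 : max 0 (1/2 - ∑ i', xF i' k) = 0 :=
            max_eq_left (by linarith)
          rw [hM0] at hrev ⊢
          nlinarith [hrev]
        · rw [sum_lam_ne xS i j k aS hk, sum_lam_ne_w w xS i j k aS hk]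
          exact h.rev k
  · rw [gstep_neg n m w B S xS i j hCS]
    by_cases hCF : i ∈ (Finset.univ : Finset (Fin n)) ∧ (∀ j', xF i j' = 0) ∧
        1 / 2 < 1 - ∑ i', xF i' j
    · -- Case C : only the full run buys
      obtain ⟨-, hF0, hFr⟩ := hCF
      rw [gstep_pos n m w B Finset.univ xF i j ⟨Finset.mem_univ i, hF0, hFr⟩]
      set aF := min (1 - ∑ i'', xF i'' j) (B i / w i j) with haF_def
      have haF : 0 < aF := lt_min (by linarith) hq
      refine ⟨h.nS, ?_, ?_, h.le1, ?_, ?_⟩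
      · intro i' j'; split_ifs
        · linarith
        · exact h.nF i' j'
      · intro i₀ hi₀ hz j'
        by_cases hi : i₀ = i
        · exfalso
          subst hi
          have h3 : ¬(1 / 2 < 1 - ∑ i', xS i' j) := fun hcon => hCS ⟨hi₀, hz, hcon⟩
          push_neg at h3
          rcases h.dom j with hd | hd <;> linarith
        · have hF := h.emp i₀ hi₀ hz
          rw [if_neg (by simp [hi])]
          exact hF j'
      · intro k
        by_cases hk : k = j
        · subst hk
          rw [sum_lam_eq xF i k aF (hF0 k)]
          rcases h.dom k with hd | hd
          · left; linarith
          · right; linarith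
        · rw [sum_lam_ne xF i j k aF hk]
          exact h.dom k
      · intro k
        by_cases hk : k = j
        · subst hk
          rw [sum_lam_eq xF i k aF (hF0 k), sum_lam_eq_w w xF i k aF (hF0 k)]
          have hrev := h.rev k
          have hM := credit_step (∑ i', xF i' k) aF (le_of_lt haF)
          have h2 : w i k * max 0 (1/2 - ∑ i', xF i' k)
              ≤ w i k * (aF + max 0 (1/2 - (aF + ∑ i', xF i' k))) :=
            mul_le_mul_of_nonneg_left hM (le_of_lt hc)
          nlinarith [hrev, h2]
        · rw [sum_lam_ne xF i j k aF hk, sum_lam_ne_w w xF i j k aF hk]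
          exact h.rev k
    · -- Case D : nothing happens
      rw [gstep_neg n m w B Finset.univ xF i j hCF]
      exact h

lemma run_lemma {n m : ℕ} (w : Fin n → Fin m → ℝ) (B : Fin n → ℝ)
    (hw : ∀ i j, 0 < w i j) (hB : ∀ i, 0 < B i) (S : Finset (Fin n)) :
    ∀ (L : List (Fin n × Fin m)) (c : ℝ) (xS xF : Fin n → Fin m → ℝ),
      L.Pairwise (fun p q => w q.1 q.2 ≤ w p.1 p.2) →
      (∀ p ∈ L, w p.1 p.2 ≤ c) → 0 ≤ c → GInv n m w S c xS xF →
      GInv n m w S 0 (L.foldl (gstep n m w B S) xS)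
        (L.foldl (gstep n m w B Finset.univ) xF) := by
  intro L
  induction L with
  | nil =>
    intro c xS xF _ _ hc hinv
    simpa using hinv.mono le_rfl hc
  | cons p L ih =>
    intro c xS xF hsort hbound hc hinv
    rw [List.pairwise_cons] at hsort
    simp only [List.foldl_cons]
    have hp : w p.1 p.2 ≤ c := hbound p List.mem_cons_self
    have hinv' : GInv n m w S (w p.1 p.2) xS xF :=
      hinv.mono (le_of_lt (hw p.1 p.2)) hp
    have hstep := step_lemma w B hw hB S p.1 p.2 xS xF hinv'
    rw [Prod.mk.eta] at hstep
    exact ih (w p.1 p.2) _ _ hsort.2 (fun q hq => hsort.1 q hq)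
      (le_of_lt (hw p.1 p.2)) hstep

lemma Wj_eq {n m : ℕ} (w : Fin n → Fin m → ℝ) (z : Fin n → Fin m → ℝ)
    (hz : ∀ i j, 0 ≤ z i j) (j : Fin m) :
    Wj n m w z j = ∑ i, w i j * z i j := by
  classical
  rw [Wj, Finset.sum_filter]
  apply Finset.sum_congr rfl
  intro i _
  by_cases hp : 0 < z i j
  · simp [hp]
  · have h0 : z i j = 0 := le_antisymm (not_lt.1 hp) (hz i j)
    simp [hp, h0]

/-- Selling revenue monotonicity of the greedy algorithm with supply clipping 1/2: for
any agent subset `S` and every item `j`, the revenue of item `j` in the run on `S` is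
at most twice its revenue in the run on all agents. -/
theorem stmt_4 (n m : ℕ) (w : Fin n → Fin m → ℝ) (B : Fin n → ℝ)
    (hw : ∀ i j, 0 < w i j) (hB : ∀ i, 0 < B i)
    (L : List (Fin n × Fin m)) (hL1 : ∀ pr : Fin n × Fin m, pr ∈ L) (hL2 : L.Nodup)
    (hL3 : L.Pairwise (fun p q => w q.1 q.2 ≤ w p.1 p.2))
    (S : Finset (Fin n)) :
    ∀ j, Wj n m w (grun n m w B S L) j ≤ 2 * Wj n m w (grun n m w B Finset.univ L) j := by
  intro j
  set c₀ : ℝ := ∑ q : Fin n × Fin m, max (w q.1 q.2) 0 with hc₀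
  have hbound : ∀ p ∈ L, w p.1 p.2 ≤ c₀ := by
    intro p _
    refine le_trans (le_max_left _ 0) ?_
    exact Finset.single_le_sum (f := fun q : Fin n × Fin m => max (w q.1 q.2) 0)
      (fun q _ => le_max_right _ 0) (Finset.mem_univ p)
  have hc0 : (0:ℝ) ≤ c₀ := Finset.sum_nonneg fun q _ => le_max_right _ 0
  have hinit : GInv n m w S c₀ (fun _ _ => 0) (fun _ _ => 0) := by
    refine ⟨fun _ _ => le_rfl, fun _ _ => le_rfl, fun _ _ _ _ => rfl, ?_, ?_, ?_⟩
    · intro k; simp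
    · intro k; left; simp
    · intro k
      simp only [Finset.sum_const_zero, mul_zero, sub_zero, mul_one]
      have : max (0:ℝ) (1/2) = 1/2 := max_eq_right (by norm_num)
      rw [this]; linarith
  have hfin := run_lemma w B hw hB S L c₀ (fun _ _ => 0) (fun _ _ => 0) hL3 hbound hc0 hinit
  have hrev := hfin.rev j
  rw [grun, grun, Wj_eq w _ hfin.nS j, Wj_eq w _ hfin.nF j]
  simp only [zero_mul, mul_zero, add_zero, mul_one, zero_add] at hrev
  linarith [hrev]
end

section
/- If S is a uniformly random subset of [n] formed by including each agent independently with probability 1/2, then for the greedy algorithm with supply clipping 1/2, the expected total revenue when run on S is at least one quarter of the total revenue when run on all agents: E[Σ_j W_j(x^S)] ≥ (1/4)·Σ_j W_j(x). -/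
section Aux

variable {n m : ℕ} {w : Fin n → Fin m → ℝ} {B : Fin n → ℝ}

lemma gstep_cases (S : Finset (Fin n)) (x : Fin n → Fin m → ℝ) (c : Fin n) (j0 : Fin m) :
    (¬(c ∈ S ∧ (∀ j', x c j' = 0) ∧ 1 / 2 < 1 - ∑ i', x i' j0) ∧
      gstep n m w B S x (c, j0) = x) ∨
    (c ∈ S ∧ (∀ j', x c j' = 0) ∧ (1 / 2 < 1 - ∑ i', x i' j0) ∧
      gstep n m w B S x (c, j0) = fun i j =>
        if i = c ∧ j = j0 then
          min (1 - ∑ i', x i' j0) (B c / w c j0)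
        else x i j) := by
  unfold gstep
  split_ifs with h
  · exact Or.inr ⟨h.1, h.2.1, h.2.2, rfl⟩
  · exact Or.inl ⟨h, rfl⟩

lemma col_update (x : Fin n → Fin m → ℝ) (c : Fin n) (j0 : Fin m) (v : ℝ)
    (hzero : x c j0 = 0) (j : Fin m) :
    (∑ i, (if i = c ∧ j = j0 then v else x i j)) =
      (if j = j0 then v else 0) + ∑ i, x i j := by
  by_cases hj : j = j0
  · rw [if_pos hj]
    have key : ∀ i : Fin n, (if i = c ∧ j = j0 then v else x i j) =
        (if i = c then v else 0) + x i j := by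
      intro i
      by_cases hi : i = c
      · rw [if_pos ⟨hi, hj⟩, if_pos hi, hi, hj, hzero]; ring
      · rw [if_neg (fun hh => hi hh.1), if_neg hi]; ring
    rw [Finset.sum_congr rfl fun i _ => key i, Finset.sum_add_distrib]
    simp
  · simp [hj]

lemma pay_update_self (x : Fin n → Fin m → ℝ) (c : Fin n) (j0 : Fin m) (v : ℝ)
    (hrow : ∀ j', x c j' = 0) :
    (∑ j', w c j' * (if c = c ∧ j' = j0 then v else x c j')) = w c j0 * v := by
  have key : ∀ j' : Fin m, w c j' * (if c = c ∧ j' = j0 then v else x c j') =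
      (if j' = j0 then w c j0 * v else 0) := by
    intro j'
    by_cases hj : j' = j0
    · rw [if_pos ⟨rfl, hj⟩, if_pos hj, hj]
    · rw [if_neg (fun hh => hj hh.2), if_neg hj, hrow j']; ring
  rw [Finset.sum_congr rfl fun j' _ => key j']
  simp

lemma pay_update_other (x : Fin n → Fin m → ℝ) (c c' : Fin n) (j0 : Fin m) (v : ℝ)
    (hc' : c' ≠ c) :
    (∑ j', w c' j' * (if c' = c ∧ j' = j0 then v else x c' j')) =
      ∑ j', w c' j' * x c' j' := by
  simp [hc']

/-- Per-run invariants of the greedy algorithm. -/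
lemma Qlem (hw : ∀ i j, 0 < w i j) (hB : ∀ i, 0 < B i) (A : Finset (Fin n))
    (P : List (Fin n × Fin m)) :
    (∀ i j, 0 ≤ grun n m w B A P i j) ∧
    (∀ j, ∑ i, grun n m w B A P i j ≤ 1) ∧
    (∀ i j, grun n m w B A P i j ≠ 0 →
      min (1 / 2) (B i / w i j) ≤ grun n m w B A P i j ∧
      w i j * grun n m w B A P i j ≤ B i ∧ (i, j) ∈ P) := by
  induction P using List.reverseRecOn with
  | nil =>
    refine ⟨?_, ?_, ?_⟩ <;> simp [grun]
  | append_singleton P a ih =>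
    obtain ⟨c, j0⟩ := a
    have hstep : grun n m w B A (P ++ [(c, j0)]) =
        gstep n m w B A (grun n m w B A P) (c, j0) := List.foldl_concat _ _ _ _
    set x := grun n m w B A P with hx
    obtain ⟨ha, hb, hc⟩ := ih
    rcases gstep_cases (w := w) (B := B) A x c j0 with ⟨_, h⟩ | ⟨hmem, hrow, hrem, h⟩
    · rw [hstep, h]
      exact ⟨ha, hb, fun i j hne =>
        ⟨(hc i j hne).1, (hc i j hne).2.1, List.mem_append_left _ (hc i j hne).2.2⟩⟩
    · rw [hstep, h]
      set r : ℝ := 1 - ∑ i', x i' j0 with hr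
      set b : ℝ := B c / w c j0 with hbdef
      have hbpos : 0 < b := div_pos (hB c) (hw c j0)
      have hvpos : 0 < min r b := lt_min (by linarith) hbpos
      have hwb : w c j0 * b = B c := mul_div_cancel₀ _ (ne_of_gt (hw c j0))
      refine ⟨?_, ?_, ?_⟩
      · intro i j
        dsimp only
        by_cases hij : i = c ∧ j = j0
        · rw [if_pos hij]; linarith
        · rw [if_neg hij]; exact ha i j
      · intro j
        dsimp only
        rw [col_update x c j0 _ (hrow j0) j]
        by_cases hj : j = j0
        · rw [if_pos hj, hj]
          have hmin : min r b ≤ r := min_le_left _ _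
          have hreq : r = 1 - ∑ i', x i' j0 := hr
          linarith
        · rw [if_neg hj]; linarith [hb j]
      · intro i j hne
        dsimp only at hne ⊢
        by_cases hij : i = c ∧ j = j0
        · rw [if_pos hij] at hne ⊢
          obtain ⟨hi, hj⟩ := hij
          rw [hi, hj]
          refine ⟨?_, ?_, List.mem_append_right _ (by simp)⟩
          · exact le_min (le_trans (min_le_left _ _) (by linarith)) (min_le_right _ _)
          · calc w c j0 * min r b ≤ w c j0 * b :=
                  mul_le_mul_of_nonneg_left (min_le_right _ _) (le_of_lt (hw c j0))
              _ = B c := hwb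
        · rw [if_neg hij] at hne ⊢
          exact ⟨(hc i j hne).1, (hc i j hne).2.1, List.mem_append_left _ (hc i j hne).2.2⟩

end Aux

section Aux2

variable {n m : ℕ} {w : Fin n → Fin m → ℝ} {B : Fin n → ℝ}

/-- Joint coupling invariant between the run on `S` and the run on all agents. -/
lemma InvLem (hw : ∀ i j, 0 < w i j) (hB : ∀ i, 0 < B i)
    {L : List (Fin n × Fin m)}
    (hL3 : L.Pairwise (fun p q => w q.1 q.2 ≤ w p.1 p.2))
    (S : Finset (Fin n)) :
    ∀ P rest : List (Fin n × Fin m), L = P ++ rest →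
    (∀ j, 1 / 2 < 1 - ∑ i, grun n m w B Finset.univ P i j →
      1 - ∑ i, grun n m w B Finset.univ P i j ≤ 1 - ∑ i, grun n m w B S P i j) ∧
    (∀ c ∈ S, ∑ j, w c j * grun n m w B Finset.univ P c j ≤
      2 * ∑ j, w c j * grun n m w B S P c j) := by
  intro P
  induction P using List.reverseRecOn with
  | nil =>
    intro rest hPL
    constructor
    · intro j _; simp [grun]
    · intro c _; simp [grun]
  | append_singleton P a ih =>
    intro rest hPL
    obtain ⟨c, j0⟩ := a
    have hPL' : L = P ++ ((c, j0) :: rest) := by rw [hPL]; simp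
    obtain ⟨hI, hA⟩ := ih ((c, j0) :: rest) hPL'
    have hstepS : grun n m w B S (P ++ [(c, j0)]) =
        gstep n m w B S (grun n m w B S P) (c, j0) := List.foldl_concat _ _ _ _
    have hstepT : grun n m w B Finset.univ (P ++ [(c, j0)]) =
        gstep n m w B Finset.univ (grun n m w B Finset.univ P) (c, j0) := List.foldl_concat _ _ _ _
    set xS := grun n m w B S P with hxS
    set xT := grun n m w B Finset.univ P with hxT
    obtain ⟨haS, hbS, hcS⟩ := Qlem hw hB S P
    obtain ⟨haT, hbT, hcT⟩ := Qlem hw hB Finset.univ P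
    set b : ℝ := B c / w c j0 with hbdef
    have hbpos : 0 < b := div_pos (hB c) (hw c j0)
    have hwb : w c j0 * b = B c := mul_div_cancel₀ _ (ne_of_gt (hw c j0))
    set rS : ℝ := 1 - ∑ i', xS i' j0 with hrS
    set rT : ℝ := 1 - ∑ i', xT i' j0 with hrT
    have hrT1 : rT ≤ 1 := by
      have : 0 ≤ ∑ i', xT i' j0 := Finset.sum_nonneg fun i _ => haT i j0
      rw [hrT]; linarith
    have hsort : ∀ j1 : Fin m, ((c : Fin n), j1) ∈ P → w c j0 ≤ w c j1 := by
      intro j1 hmem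
      have hpw : L.Pairwise (fun p q => w q.1 q.2 ≤ w p.1 p.2) := hL3
      rw [hPL'] at hpw
      exact (List.pairwise_append.mp hpw).2.2 (c, j1) hmem (c, j0) (by simp)
    have paynonnegS : ∀ c', 0 ≤ ∑ j, w c' j * xS c' j :=
      fun c' => Finset.sum_nonneg fun j _ => mul_nonneg (le_of_lt (hw c' j)) (haS c' j)
    have paynonnegT : ∀ c', 0 ≤ ∑ j, w c' j * xT c' j :=
      fun c' => Finset.sum_nonneg fun j _ => mul_nonneg (le_of_lt (hw c' j)) (haT c' j)
    rcases gstep_cases (w := w) (B := B) S xS c j0 with ⟨hnS, hS⟩ | ⟨hmemS, hrowS, hremS, hS⟩ <;>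
      rcases gstep_cases (w := w) (B := B) Finset.univ xT c j0 with ⟨hnT, hT⟩ | ⟨_, hrowT, hremT, hT⟩
    · -- neither buys
      rw [hstepS, hS, hstepT, hT]
      exact ⟨hI, hA⟩
    · -- T buys, S does not
      rw [hstepS, hS, hstepT, hT]
      simp only [← hrT, ← hrS, ← hbdef] at hremT ⊢
      have hvT0 : 0 ≤ min rT b := le_min (by linarith) (le_of_lt hbpos)
      constructor
      · intro j hj
        rw [col_update xT c j0 _ (hrowT j0) j] at hj ⊢
        by_cases hj0 : j = j0
        · rw [if_pos hj0] at hj ⊢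
          rw [hj0]
          have h2 : rT ≤ rS := by
            have h := hI j0 (by rw [← hrT]; exact hremT)
            rw [← hrT, ← hrS] at h; exact h
          rw [hj0] at hj
          linarith [hrT, hrS]
        · rw [if_neg hj0] at hj ⊢
          have := hI j (by linarith)
          linarith
      · intro c' hc'
        by_cases hcc : c' = c
        · subst hcc
          rw [pay_update_self xT c' j0 _ hrowT]
          have hrSgt : 1 / 2 < rS := by
            have h := hI j0 (by rw [← hrT]; exact hremT)
            rw [← hrT, ← hrS] at h
            linarith
          have hex : ∃ j1, xS c' j1 ≠ 0 := by
            by_contra hall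
            push_neg at hall
            push_neg at hnS
            have h6 := hnS hc' hall
            rw [← hrS] at h6
            linarith
          obtain ⟨j1, hj1⟩ := hex
          obtain ⟨hlo, _, hmemP⟩ := hcS c' j1 hj1
          have hw01 : w c' j0 ≤ w c' j1 := hsort j1 hmemP
          have hpay1 : w c' j1 * xS c' j1 ≤ ∑ j, w c' j * xS c' j :=
            Finset.single_le_sum
              (fun j _ => mul_nonneg (le_of_lt (hw c' j)) (haS c' j))
              (Finset.mem_univ j1)
          have e2 : w c' j1 * (B c' / w c' j1) = B c' :=
            mul_div_cancel₀ _ (ne_of_gt (hw c' j1))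
          have hw0pos := hw c' j0
          have hw1pos := hw c' j1
          have hBpos := hB c'
          rcases le_total b rT with hbr | hbr
          · rw [min_eq_right hbr]
            rcases le_total (1 / 2 : ℝ) (B c' / w c' j1) with hm | hm
            · rw [min_eq_left hm] at hlo
              have f1 : w c' j0 * b ≤ w c' j0 * rT :=
                mul_le_mul_of_nonneg_left hbr (le_of_lt hw0pos)
              have f2 : w c' j0 * rT ≤ w c' j0 * 1 :=
                mul_le_mul_of_nonneg_left hrT1 (le_of_lt hw0pos)
              have f3 : w c' j1 * (1 / 2) ≤ w c' j1 * xS c' j1 :=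
                mul_le_mul_of_nonneg_left hlo (le_of_lt hw1pos)
              linarith
            · rw [min_eq_right hm] at hlo
              have f3 : w c' j1 * (B c' / w c' j1) ≤ w c' j1 * xS c' j1 :=
                mul_le_mul_of_nonneg_left hlo (le_of_lt hw1pos)
              rw [e2] at f3
              linarith [hwb]
          · rw [min_eq_left hbr]
            rcases le_total (1 / 2 : ℝ) (B c' / w c' j1) with hm | hm
            · rw [min_eq_left hm] at hlo
              have f2 : w c' j0 * rT ≤ w c' j0 * 1 :=
                mul_le_mul_of_nonneg_left hrT1 (le_of_lt hw0pos)
              have f3 : w c' j1 * (1 / 2) ≤ w c' j1 * xS c' j1 :=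
                mul_le_mul_of_nonneg_left hlo (le_of_lt hw1pos)
              linarith
            · rw [min_eq_right hm] at hlo
              have f1 : w c' j0 * rT ≤ w c' j0 * b :=
                mul_le_mul_of_nonneg_left hbr (le_of_lt hw0pos)
              have f3 : w c' j1 * (B c' / w c' j1) ≤ w c' j1 * xS c' j1 :=
                mul_le_mul_of_nonneg_left hlo (le_of_lt hw1pos)
              rw [e2] at f3
              linarith [hwb]
        · rw [pay_update_other xT c c' j0 _ hcc]
          exact hA c' hc'
    · -- S buys, T does not
      rw [hstepS, hS, hstepT, hT]
      simp only [← hrT, ← hrS, ← hbdef] at hremS ⊢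
      have hvS0 : 0 ≤ min rS b := le_min (by linarith) (le_of_lt hbpos)
      constructor
      · intro j hj
        rw [col_update xS c j0 _ (hrowS j0) j]
        by_cases hj0 : j = j0
        · exfalso
          rw [hj0] at hj
          rw [← hrT] at hj
          push_neg at hnT
          have hex : ∃ j1, xT c j1 ≠ 0 := by
            by_contra hall
            push_neg at hall
            have h6 := hnT (Finset.mem_univ c) hall
            rw [← hrT] at h6
            linarith
          obtain ⟨j1, hj1⟩ := hex
          have hpos : 0 < ∑ j', w c j' * xT c j' := by
            have h1 : 0 < xT c j1 := lt_of_le_of_ne (haT c j1) (Ne.symm hj1)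
            have h2 : 0 < w c j1 * xT c j1 := mul_pos (hw c j1) h1
            have h3 : w c j1 * xT c j1 ≤ ∑ j', w c j' * xT c j' :=
              Finset.single_le_sum
                (fun j' _ => mul_nonneg (le_of_lt (hw c j')) (haT c j'))
                (Finset.mem_univ j1)
            linarith
          have h4 := hA c hmemS
          have h5 : ∑ j', w c j' * xS c j' = 0 := by
            apply Finset.sum_eq_zero
            intro j' _
            rw [hrowS j']; ring
          rw [h5] at h4
          linarith
        · rw [if_neg hj0]
          have := hI j hj
          linarith
      · intro c' hc'
        by_cases hcc : c' = c
        · subst hcc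
          rw [pay_update_self xS c' j0 _ hrowS]
          have h4 := hA c' hc'
          have h5 : ∑ j', w c' j' * xS c' j' = 0 := by
            apply Finset.sum_eq_zero
            intro j' _
            rw [hrowS j']; ring
          rw [h5] at h4
          have : 0 ≤ w c' j0 * min rS b :=
            mul_nonneg (le_of_lt (hw c' j0)) hvS0
          linarith
        · rw [pay_update_other xS c c' j0 _ hcc]
          exact hA c' hc'
    · -- both buy
      rw [hstepS, hS, hstepT, hT]
      simp only [← hrT, ← hrS, ← hbdef] at hremT hremS ⊢
      have hvT0 : 0 ≤ min rT b := le_min (by linarith) (le_of_lt hbpos)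
      have hvS0 : 0 ≤ min rS b := le_min (by linarith) (le_of_lt hbpos)
      have hTS : rT ≤ rS := by
        have h := hI j0 (by rw [← hrT]; exact hremT)
        rw [← hrT, ← hrS] at h; exact h
      constructor
      · intro j hj
        rw [col_update xT c j0 _ (hrowT j0) j] at hj ⊢
        rw [col_update xS c j0 _ (hrowS j0) j]
        by_cases hj0 : j = j0
        · rw [if_pos hj0] at hj ⊢
          rw [if_pos hj0]
          rw [hj0] at hj ⊢
          rcases le_total b rT with hbr | hbr
          · rw [min_eq_right hbr] at hj ⊢
            rw [min_eq_right (le_trans hbr hTS)]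
            linarith [hrT, hrS]
          · rw [min_eq_left hbr] at hj
            linarith [hrT]
        · rw [if_neg hj0] at hj ⊢
          rw [if_neg hj0]
          have := hI j (by linarith)
          linarith
      · intro c' hc'
        by_cases hcc : c' = c
        · subst hcc
          rw [pay_update_self xT c' j0 _ hrowT, pay_update_self xS c' j0 _ hrowS]
          have hw0pos := hw c' j0
          rcases le_total b rS with hbr | hbr
          · rw [min_eq_right hbr]
            have f1 : min rT b ≤ b := min_le_right _ _
            have f2 : w c' j0 * min rT b ≤ w c' j0 * b :=
              mul_le_mul_of_nonneg_left f1 (le_of_lt hw0pos)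
            have f3 : 0 ≤ w c' j0 * b := mul_nonneg (le_of_lt hw0pos) (le_of_lt hbpos)
            linarith
          · rw [min_eq_left hbr]
            have f1 : min rT b ≤ rT := min_le_left _ _
            have f2 : w c' j0 * min rT b ≤ w c' j0 * rT :=
              mul_le_mul_of_nonneg_left f1 (le_of_lt hw0pos)
            have f4 : w c' j0 * rT ≤ w c' j0 * 1 :=
              mul_le_mul_of_nonneg_left hrT1 (le_of_lt hw0pos)
            have f5 : w c' j0 * (1 / 2) ≤ w c' j0 * rS :=
              mul_le_mul_of_nonneg_left (le_of_lt hremS) (le_of_lt hw0pos)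
            rw [mul_one] at f4
            nlinarith [f2, f4, f5]
        · rw [pay_update_other xT c c' j0 _ hcc, pay_update_other xS c c' j0 _ hcc]
          exact hA c' hc'

end Aux2

section Final

variable {n m : ℕ} {w : Fin n → Fin m → ℝ} {B : Fin n → ℝ}

open Classical in
lemma rev_eq (hw : ∀ i j, 0 < w i j) (hB : ∀ i, 0 < B i) (A : Finset (Fin n))
    (P : List (Fin n × Fin m)) :
    ∑ j, Wj n m w (grun n m w B A P) j = ∑ i, ∑ j, w i j * grun n m w B A P i j := by
  obtain ⟨ha, _, _⟩ := Qlem hw hB A P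
  have h1 : ∀ j, Wj n m w (grun n m w B A P) j = ∑ i, w i j * grun n m w B A P i j := by
    intro j
    unfold Wj
    rw [Finset.sum_filter]
    apply Finset.sum_congr rfl
    intro i _
    by_cases hi : 0 < grun n m w B A P i j
    · rw [if_pos hi]
    · rw [if_neg hi]
      have : grun n m w B A P i j = 0 := le_antisymm (not_lt.mp hi) (ha i j)
      rw [this, mul_zero]
  rw [Finset.sum_congr rfl fun j _ => h1 j, Finset.sum_comm]

lemma count_sum (g : Fin n → ℝ) :
    ∑ S : Finset (Fin n), ∑ i ∈ S, g i = (2 ^ n : ℝ) / 2 * ∑ i, g i := by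
  classical
  have h1 : ∀ S : Finset (Fin n), ∑ i ∈ S, g i = ∑ i, if i ∈ S then g i else 0 := by
    intro S
    rw [Finset.sum_ite_mem, Finset.univ_inter]
  rw [Finset.sum_congr rfl fun S _ => h1 S, Finset.sum_comm]
  have h2 : ∀ i : Fin n, ∑ S : Finset (Fin n), (if i ∈ S then g i else 0)
      = (2 ^ n : ℝ) / 2 * g i := by
    intro i
    have hinv : Function.Involutive (fun S : Finset (Fin n) => Sᶜ) := fun S => compl_compl S
    have he := Equiv.sum_comp hinv.toPerm (fun S : Finset (Fin n) => if i ∈ S then g i else 0)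
    have he' : ∑ S : Finset (Fin n), (if i ∈ Sᶜ then g i else 0)
        = ∑ S : Finset (Fin n), (if i ∈ S then g i else 0) := he
    have hsplit : ∑ S : Finset (Fin n), ((if i ∈ S then g i else 0) + (if i ∈ Sᶜ then g i else 0))
        = ∑ S : Finset (Fin n), g i := by
      apply Finset.sum_congr rfl
      intro S _
      by_cases hi : i ∈ S
      · rw [if_pos hi, if_neg (by simp [hi]), add_zero]
      · rw [if_neg hi, if_pos (by simp [hi]), zero_add]
    rw [Finset.sum_add_distrib, he'] at hsplit
    have hcard : (Finset.univ : Finset (Finset (Fin n))).card = 2 ^ n := by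
      rw [Finset.card_univ, Fintype.card_finset, Fintype.card_fin]
    rw [Finset.sum_const, hcard, nsmul_eq_mul] at hsplit
    push_cast at hsplit
    linarith
  rw [Finset.sum_congr rfl fun i _ => h2 i, ← Finset.mul_sum]


/-- Random sampling guarantee for the greedy algorithm with supply clipping 1/2: over a
uniformly random subset `S` of the agents (each agent included independently with
probability 1/2, i.e. uniform over all `2^n` subsets), the expected total revenue of
the run on `S` is at least one quarter of the total revenue of the run on all agents. -/
theorem stmt_6 (n m : ℕ) (w : Fin n → Fin m → ℝ) (B : Fin n → ℝ)
    (hw : ∀ i j, 0 < w i j) (hB : ∀ i, 0 < B i)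
    (L : List (Fin n × Fin m)) (hL1 : ∀ pr : Fin n × Fin m, pr ∈ L) (hL2 : L.Nodup)
    (hL3 : L.Pairwise (fun p q => w q.1 q.2 ≤ w p.1 p.2)) :
    (1 / 4) * ∑ j, Wj n m w (grun n m w B Finset.univ L) j
      ≤ (∑ S : Finset (Fin n), ∑ j, Wj n m w (grun n m w B S L) j) / 2 ^ n := by
  classical
  set payT : Fin n → ℝ := fun i => ∑ j, w i j * grun n m w B Finset.univ L i j with hpayT
  -- each run on S earns at least half the full-run payment of each member of S
  have hkey : ∀ S : Finset (Fin n),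
      ∑ i ∈ S, payT i / 2 ≤ ∑ j, Wj n m w (grun n m w B S L) j := by
    intro S
    rw [rev_eq hw hB S L]
    have h1 := (InvLem hw hB hL3 S L [] (by simp)).2
    have h2 : ∑ i ∈ S, payT i / 2 ≤ ∑ i ∈ S, ∑ j, w i j * grun n m w B S L i j := by
      apply Finset.sum_le_sum
      intro i hi
      have := h1 i hi
      rw [hpayT]
      dsimp only
      linarith
    refine le_trans h2 (Finset.sum_le_sum_of_subset_of_nonneg (Finset.subset_univ S) ?_)
    intro i _ _
    exact Finset.sum_nonneg fun j _ =>
      mul_nonneg (le_of_lt (hw i j)) ((Qlem hw hB S L).1 i j)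
  have hsum : ∑ S : Finset (Fin n), ∑ i ∈ S, payT i / 2
      ≤ ∑ S : Finset (Fin n), ∑ j, Wj n m w (grun n m w B S L) j :=
    Finset.sum_le_sum fun S _ => hkey S
  rw [count_sum (fun i => payT i / 2)] at hsum
  have hrevT : ∑ j, Wj n m w (grun n m w B Finset.univ L) j = ∑ i, payT i :=
    rev_eq hw hB Finset.univ L
  have hpow : (0 : ℝ) < 2 ^ n := by positivity
  rw [le_div_iff₀ hpow, hrevT]
  have e1 : ∑ i, payT i / 2 = (∑ i, payT i) / 2 := by
    rw [Finset.sum_div]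
  rw [e1] at hsum
  nlinarith [hsum]


end Final
end

section
/- The mechanism that runs the indivisible first-price procedure with probability 9/13 (revenue max_k min{B_k, v_k/τ_k}) and the random-sampling reserve-price procedure with probability 4/13 achieves expected revenue at least OPT/52 for the single divisible item auction, where OPT is the optimal offline revenue. -/
open Classical in
/-- Sequential selling of a divisible item at per-unit reserve price `r`: agents arrive
in the order of the list; an arriving agent `i` with `v i / τ i ≥ r` buys
`min (B i / r) (remaining fraction)`. Returns the total revenue collected, given the
currently remaining fraction. -/
noncomputable def sellRev (n : ℕ) (v B τ : Fin n → ℝ) (r : ℝ) :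
    List (Fin n) → ℝ → ℝ
  | [], _ => 0
  | i :: rest, α =>
    let y := if r ≤ v i / τ i then min (B i / r) α else 0
    y * r + sellRev n v B τ r rest (α - y)

/-- The optimal offline revenue of selling one divisible unit-supply item to the agents
in `A`: the supremum of `Σ p i` over allocations `x` and payments `p` supported on `A`
with `Σ x ≤ 1`, `p i ≤ B i` and `p i * τ i ≤ x i * v i`. -/
noncomputable def optRev (n : ℕ) (v B τ : Fin n → ℝ) (A : Finset (Fin n)) : ℝ :=
  sSup {t : ℝ | ∃ x p : Fin n → ℝ,
    (∀ i, 0 ≤ x i) ∧ (∀ i ∉ A, x i = 0 ∧ p i = 0) ∧ (∑ i, x i) ≤ 1 ∧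
    (∀ i, p i ≤ B i) ∧ (∀ i, p i * τ i ≤ x i * v i) ∧ t = ∑ i, p i}

section Aux

variable {n : ℕ} {v B τ : Fin n → ℝ}

lemma sellRev_cons (r : ℝ) (i : Fin n) (rest : List (Fin n)) (α : ℝ) :
    sellRev n v B τ r (i :: rest) α =
      (if r ≤ v i / τ i then min (B i / r) α else 0) * r +
        sellRev n v B τ r rest (α - (if r ≤ v i / τ i then min (B i / r) α else 0)) := by
  rw [sellRev]

lemma sellRev_nonneg (r : ℝ) (hr : 0 ≤ r) (hB : ∀ i, 0 ≤ B i) :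
    ∀ (L : List (Fin n)) (α : ℝ), 0 ≤ α → 0 ≤ sellRev n v B τ r L α := by
  intro L
  induction L with
  | nil => intro α _; simp [sellRev]
  | cons i rest ih =>
    intro α hα
    rw [sellRev_cons]
    have h1 : (0:ℝ) ≤ if r ≤ v i / τ i then min (B i / r) α else 0 := by
      split
      · exact le_min (div_nonneg (hB i) hr) hα
      · exact le_rfl
    have h2 : (if r ≤ v i / τ i then min (B i / r) α else 0) ≤ α := by
      split
      · exact min_le_right _ _
      · exact hα
    have := ih (α - (if r ≤ v i / τ i then min (B i / r) α else 0)) (by linarith)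
    nlinarith [mul_nonneg h1 hr]

lemma sellRev_ge (r : ℝ) (hr : 0 < r) (hB : ∀ i, 0 < B i) :
    ∀ (L : List (Fin n)) (α : ℝ), 0 ≤ α →
      min (r * α) ((L.map (fun i => if r ≤ v i / τ i then B i else 0)).sum)
        ≤ sellRev n v B τ r L α := by
  intro L
  induction L with
  | nil =>
    intro α hα
    simpa [sellRev] using min_le_right (r * α) 0
  | cons i rest ih =>
    intro α hα
    rw [sellRev_cons]
    by_cases h : r ≤ v i / τ i
    · simp only [h, if_true, List.map_cons, List.sum_cons]
      by_cases h2 : B i / r ≤ α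
      · rw [min_eq_left h2]
        have hrec := ih (α - B i / r) (by linarith)
        have hBi : B i / r * r = B i := div_mul_cancel₀ _ (ne_of_gt hr)
        rw [hBi]
        have : min (r * α) (B i + (rest.map (fun i => if r ≤ v i / τ i then B i else 0)).sum)
            ≤ B i + min (r * (α - B i / r)) ((rest.map (fun i => if r ≤ v i / τ i then B i else 0)).sum) := by
          have : r * (α - B i / r) = r * α - B i := by
            field_simp
          rw [this]
          rcases le_total (r * α - B i) ((rest.map (fun i => if r ≤ v i / τ i then B i else 0)).sum) with hc | hc
          · rw [min_eq_left hc]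
            have : min (r * α) (B i + (rest.map (fun i => if r ≤ v i / τ i then B i else 0)).sum) ≤ r * α :=
              min_le_left _ _
            linarith
          · rw [min_eq_right hc]
            exact le_trans (min_le_right _ _) (by linarith)
        linarith
      · push_neg at h2
        rw [min_eq_right (le_of_lt h2)]
        have hrec : (0:ℝ) ≤ sellRev n v B τ r rest (α - α) := by
          exact sellRev_nonneg (v := v) (τ := τ) r (le_of_lt hr) (fun i => le_of_lt (hB i))
            rest (α - α) (by linarith)
        have : min (r * α) (B i + (rest.map (fun i => if r ≤ v i / τ i then B i else 0)).sum) ≤ α * r := by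
          rw [mul_comm]
          exact min_le_left _ _
        linarith
    · simp only [h, if_false, List.map_cons, List.sum_cons, zero_mul, zero_add, sub_zero]
      exact le_trans (le_of_eq (by ring_nf)) (ih α hα)

/-- the feasible set -/
def FeasSet (n : ℕ) (v B τ : Fin n → ℝ) (A : Finset (Fin n)) : Set ℝ :=
  {t : ℝ | ∃ x p : Fin n → ℝ,
    (∀ i, 0 ≤ x i) ∧ (∀ i ∉ A, x i = 0 ∧ p i = 0) ∧ (∑ i, x i) ≤ 1 ∧
    (∀ i, p i ≤ B i) ∧ (∀ i, p i * τ i ≤ x i * v i) ∧ t = ∑ i, p i}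

lemma optRev_eq (A : Finset (Fin n)) : optRev n v B τ A = sSup (FeasSet n v B τ A) := rfl

lemma zero_mem_feas (hB : ∀ i, 0 < B i) (A : Finset (Fin n)) :
    (0:ℝ) ∈ FeasSet n v B τ A :=
  ⟨0, 0, fun _ => le_rfl, fun _ _ => ⟨rfl, rfl⟩, by simp, fun i => le_of_lt (hB i),
    fun i => by simp, by simp⟩

lemma feas_nonempty (hB : ∀ i, 0 < B i) (A : Finset (Fin n)) :
    (FeasSet n v B τ A).Nonempty := ⟨0, zero_mem_feas hB A⟩

lemma feas_bddAbove (A : Finset (Fin n)) : BddAbove (FeasSet n v B τ A) := by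
  refine ⟨∑ i, B i, ?_⟩
  rintro t ⟨x, p, hx, hsupp, hsum, hpB, hpτ, rfl⟩
  exact Finset.sum_le_sum (fun i _ => hpB i)

lemma optRev_nonneg (hB : ∀ i, 0 < B i) (A : Finset (Fin n)) : 0 ≤ optRev n v B τ A :=
  le_csSup (feas_bddAbove A) (zero_mem_feas hB A)

lemma optRev_le_univ (hB : ∀ i, 0 < B i) (A : Finset (Fin n)) :
    optRev n v B τ A ≤ optRev n v B τ Finset.univ := by
  refine csSup_le_csSup (feas_bddAbove _) (feas_nonempty hB A) ?_
  rintro t ⟨x, p, hx, hsupp, hsum, hpB, hpτ, rfl⟩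
  exact ⟨x, p, hx, by simp, hsum, hpB, hpτ, rfl⟩

/-- restriction: the revenue of a feasible (univ) solution restricted to S is at most optRev S -/
lemma restrict_le_optRev (hB : ∀ i, 0 < B i) (hv : ∀ i, 0 ≤ v i)
    (x p : Fin n → ℝ) (hx : ∀ i, 0 ≤ x i) (hp : ∀ i, 0 ≤ p i)
    (hsum : (∑ i, x i) ≤ 1) (hpB : ∀ i, p i ≤ B i) (hpτ : ∀ i, p i * τ i ≤ x i * v i)
    (S : Finset (Fin n)) :
    (∑ i ∈ S, p i) ≤ optRev n v B τ S := by
  refine le_csSup (feas_bddAbove S) ?_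
  refine ⟨(fun i => if i ∈ S then x i else 0), (fun i => if i ∈ S then p i else 0),
    ?_, ?_, ?_, ?_, ?_, ?_⟩
  · intro i; dsimp only; split; exacts [hx i, le_rfl]
  · intro i hi; simp [hi]
  · refine le_trans (Finset.sum_le_sum (fun i _ => ?_)) hsum
    split; exacts [le_rfl, hx i]
  · intro i; dsimp only; split; exacts [hpB i, le_of_lt (hB i)]
  · intro i
    dsimp only
    split
    · exact hpτ i
    · simp
  · dsimp only
    rw [Finset.sum_ite_mem, Finset.univ_inter]

/-- reserve price upper bound -/
lemma optRev_le_reserve (hB : ∀ i, 0 < B i) (hx0 : ∀ i, 0 < τ i)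
    (A : Finset (Fin n)) (r : ℝ) (hr : 0 ≤ r) :
    optRev n v B τ A ≤ r + ∑ i ∈ A, (if r ≤ v i / τ i then B i else 0) := by
  refine csSup_le (feas_nonempty hB A) ?_
  rintro t ⟨x, p, hx, hsupp, hsum, hpB, hpτ, rfl⟩
  have key : ∀ i, p i ≤ (if i ∈ A then (if r ≤ v i / τ i then B i else 0) else 0) + x i * r := by
    intro i
    by_cases hiA : i ∈ A
    · simp only [hiA, if_true]
      by_cases he : r ≤ v i / τ i
      · simp only [he, if_true]
        have := mul_nonneg (hx i) hr
        linarith [hpB i]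
      · simp only [he, if_false, zero_add]
        push_neg at he
        have hτi := hx0 i
        have h1 : p i ≤ x i * v i / τ i := (le_div_iff₀ hτi).mpr (hpτ i)
        rw [mul_div_assoc] at h1
        exact le_trans h1 (mul_le_mul_of_nonneg_left (le_of_lt he) (hx i))
    · rcases hsupp i hiA with ⟨hx0', hp0⟩
      simp [hiA, hx0', hp0]
  calc (∑ i, p i) ≤ ∑ i, ((if i ∈ A then (if r ≤ v i / τ i then B i else 0) else 0) + x i * r) :=
        Finset.sum_le_sum (fun i _ => key i)
    _ = (∑ i, (if i ∈ A then (if r ≤ v i / τ i then B i else 0) else 0)) + (∑ i, x i) * r := by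
        rw [Finset.sum_add_distrib, Finset.sum_mul]
    _ ≤ (∑ i ∈ A, (if r ≤ v i / τ i then B i else 0)) + 1 * r := by
        have h1 : (∑ i, (if i ∈ A then (if r ≤ v i / τ i then B i else 0) else 0))
            = ∑ i ∈ A, (if r ≤ v i / τ i then B i else 0) := by
          rw [Finset.sum_ite_mem, Finset.univ_inter]
        rw [h1]
        have : (∑ i, x i) * r ≤ 1 * r := mul_le_mul_of_nonneg_right hsum hr
        linarith
    _ = r + ∑ i ∈ A, (if r ≤ v i / τ i then B i else 0) := by ring

/-- variance identity -/
lemma var_eq (p : Fin n → ℝ) (u : Finset (Fin n)) :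
    ∑ S ∈ u.powerset, ((∑ i ∈ S, p i) - (∑ i ∈ u, p i) / 2) ^ 2
      = 2 ^ u.card * (∑ i ∈ u, (p i) ^ 2) / 4 := by
  induction u using Finset.induction with
  | empty => simp
  | @insert a s ha ih =>
    rw [Finset.powerset_insert, Finset.sum_union, Finset.sum_image]
    · have hins : ∀ S ∈ s.powerset, (∑ i ∈ insert a S, p i) = p a + ∑ i ∈ S, p i := by
        intro S hS
        rw [Finset.mem_powerset] at hS
        rw [Finset.sum_insert (fun hc => ha (hS hc))]
      have hsum : (∑ i ∈ insert a s, p i) = p a + ∑ i ∈ s, p i := Finset.sum_insert ha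
      have hsq : (∑ i ∈ insert a s, (p i) ^ 2) = (p a) ^ 2 + ∑ i ∈ s, (p i) ^ 2 :=
        Finset.sum_insert ha
      calc (∑ S ∈ s.powerset, ((∑ i ∈ S, p i) - (∑ i ∈ insert a s, p i) / 2) ^ 2)
            + ∑ S ∈ s.powerset, ((∑ i ∈ insert a S, p i) - (∑ i ∈ insert a s, p i) / 2) ^ 2
          = ∑ S ∈ s.powerset, (((∑ i ∈ S, p i) - (p a + ∑ i ∈ s, p i) / 2) ^ 2
              + ((p a + ∑ i ∈ S, p i) - (p a + ∑ i ∈ s, p i) / 2) ^ 2) := by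
            rw [← Finset.sum_add_distrib]
            refine Finset.sum_congr rfl (fun S hS => ?_)
            rw [hins S hS, hsum]
        _ = ∑ S ∈ s.powerset, (2 * ((∑ i ∈ S, p i) - (∑ i ∈ s, p i) / 2) ^ 2 + (p a) ^ 2 / 2) := by
            refine Finset.sum_congr rfl (fun S hS => ?_)
            ring
        _ = 2 * (∑ S ∈ s.powerset, ((∑ i ∈ S, p i) - (∑ i ∈ s, p i) / 2) ^ 2)
              + (s.powerset.card : ℝ) * ((p a) ^ 2 / 2) := by
            rw [Finset.sum_add_distrib, Finset.mul_sum, Finset.sum_const, nsmul_eq_mul]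
        _ = 2 ^ (insert a s).card * (∑ i ∈ insert a s, (p i) ^ 2) / 4 := by
            rw [ih, Finset.card_powerset, Finset.card_insert_of_notMem ha, hsq]
            push_cast
            ring
    · intro S hS T hT hST
      have hS' := Finset.mem_powerset.mp (by simpa using hS)
      have hT' := Finset.mem_powerset.mp (by simpa using hT)
      have key : ∀ W : Finset (Fin n), W ⊆ s → (insert a W).erase a = W := by
        intro W hW
        exact Finset.erase_insert (fun hc => ha (hW hc))
      rw [← key S hS', ← key T hT', hST]
    · rw [Finset.disjoint_right]
      rintro S hS hS'
      rw [Finset.mem_image] at hS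
      rcases hS with ⟨T, hT, rfl⟩
      rw [Finset.mem_powerset] at hS'
      exact ha (hS' (Finset.mem_insert_self a T))

lemma sort_map_sum (T : Finset (Fin n)) (f : Fin n → ℝ) :
    ((T.sort (· ≤ ·)).map f).sum = ∑ i ∈ T, f i := by
  have hperm : List.Perm (T.sort (· ≤ ·)) T.toList := Finset.sort_perm_toList T _
  rw [List.Perm.sum_eq (hperm.map f)]
  exact Finset.sum_map_toList T f

end Aux

lemma num_final (K ε ε₀ D M N Gc Bc T : ℝ)
    (hK : 0 < K) (hε : 0 < ε) (hε₀ : 0 < ε₀) (hε₀ε : ε₀ ≤ ε) (hε₀K : ε₀ ≤ K / 16)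
    (hD1 : K - ε₀ ≤ D) (hD2 : D ≤ K) (hM0 : 0 ≤ M) (hM : M ≤ K / 36)
    (hN : 0 < N) (hBc0 : 0 ≤ Bc) (hGB : Gc + Bc = N)
    (hbad : Bc * (D / 6) ^ 2 ≤ N * (M * D) / 4)
    (hTb : Gc * (K / 12 - ε₀ / 3) ≤ T) :
    K / 16 - 13 * ε / 4 ≤ T / N := by
  have hDpos : 0 < D := by nlinarith
  have hL : 0 < K / 12 - ε₀ / 3 := by linarith
  have h9 : Bc * D ≤ 9 * (N * M) := by nlinarith
  have hGc : N * (D - 9 * M) ≤ Gc * D := by nlinarith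
  have hTD : N * ((D - 9 * M) * (K / 12 - ε₀ / 3)) ≤ T * D := by
    nlinarith [mul_le_mul_of_nonneg_right hGc hL.le,
      mul_le_mul_of_nonneg_right hTb hDpos.le]
  have hkey : D * (K / 16 - 13 * ε / 4) ≤ (D - 9 * M) * (K / 12 - ε₀ / 3) := by
    nlinarith [mul_nonneg (sub_nonneg.mpr hε₀ε) hDpos.le,
      mul_nonneg (sub_nonneg.mpr hε₀K) hε₀.le, sq_nonneg (D - K), sq_nonneg ε₀,
      mul_nonneg (sub_nonneg.mpr hM) hDpos.le]
  have hfin : N * (K / 16 - 13 * ε / 4) ≤ T := by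
    nlinarith [mul_le_mul_of_nonneg_left hkey hN.le]
  rw [le_div_iff₀ hN]
  linarith


set_option maxHeartbeats 1000000 in
/-- Single divisible item auction (fully private setting): the mechanism that with
probability 9/13 runs the indivisible first-price procedure (revenue
`max_k min (B k) (v k / τ k)`) and with probability 4/13 runs the random-sampling
procedure (sample each agent into `S` independently with probability 1/2, set the
reserve price to a quarter of the optimal revenue restricted to `S`, and sell
sequentially to the remaining agents in a fixed order) has expected revenue at least
`OPT/52`. -/
theorem stmt_9 (n : ℕ) (hn : 0 < n) (v B τ : Fin n → ℝ)
    (hv : ∀ i, 0 ≤ v i) (hB : ∀ i, 0 < B i) (hτ : ∀ i, 0 < τ i) :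
    optRev n v B τ Finset.univ / 52 ≤
      (9 / 13) * (Finset.univ.sup'
          (Finset.univ_nonempty_iff.mpr (Fin.pos_iff_nonempty.mp hn))
          (fun k => min (B k) (v k / τ k)))
      + (4 / 13) * (∑ S : Finset (Fin n),
          sellRev n v B τ (optRev n v B τ S / 4)
            ((Finset.univ \ S).sort (· ≤ ·)) 1) / 2 ^ n := by
  classical
  set M := Finset.univ.sup'
      (Finset.univ_nonempty_iff.mpr (Fin.pos_iff_nonempty.mp hn))
      (fun k => min (B k) (v k / τ k)) with hMdef
  set K := optRev n v B τ Finset.univ with hKdef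
  set T := ∑ S : Finset (Fin n),
      sellRev n v B τ (optRev n v B τ S / 4) ((Finset.univ \ S).sort (· ≤ ·)) 1 with hTdef
  have hMtop : ∀ i, min (B i) (v i / τ i) ≤ M := by
    intro i
    rw [hMdef]
    exact Finset.le_sup' (fun k => min (B k) (v k / τ k)) (Finset.mem_univ i)
  have hM0 : 0 ≤ M :=
    le_trans (le_min (hB ⟨0, hn⟩).le (div_nonneg (hv ⟨0, hn⟩) (hτ ⟨0, hn⟩).le)) (hMtop ⟨0, hn⟩)
  have hT0 : 0 ≤ T := by
    refine Finset.sum_nonneg fun S _ => ?_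
    exact sellRev_nonneg _ (div_nonneg (optRev_nonneg hB S) (by norm_num)) (fun i => (hB i).le) _ 1 zero_le_one
  have hN : (0:ℝ) < 2 ^ n := by positivity
  have hK0 : 0 ≤ K := optRev_nonneg hB _
  by_cases hcase : K / 36 ≤ M
  · have h2 : 0 ≤ 4 / 13 * T / 2 ^ n := by positivity
    linarith
  · push_neg at hcase
    have hKpos : 0 < K := by nlinarith
    refine le_of_forall_pos_le_add fun ε hε => ?_
    set ε₀ := min ε (K / 16) with hε₀def
    have hε₀pos : 0 < ε₀ := lt_min hε (by linarith)
    have hε₀ε : ε₀ ≤ ε := min_le_left _ _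
    have hε₀K : ε₀ ≤ K / 16 := min_le_right _ _
    obtain ⟨t, htmem, htgt⟩ := exists_lt_of_lt_csSup (feas_nonempty hB Finset.univ)
      (show K - ε₀ < K by linarith)
    obtain ⟨x, p0, hx, hsupp, hsum, hpB, hpτ, rfl⟩ := htmem
    set p := fun i => max (p0 i) 0 with hpdef
    have hp0 : ∀ i, 0 ≤ p i := fun i => le_max_right _ _
    have hpB' : ∀ i, p i ≤ B i := fun i => max_le (hpB i) (hB i).le
    have hpτ' : ∀ i, p i * τ i ≤ x i * v i := by
      intro i
      rcases le_total (p0 i) 0 with h | h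
      · rw [hpdef]; dsimp only
        rw [max_eq_right h, zero_mul]
        exact mul_nonneg (hx i) (hv i)
      · rw [hpdef]; dsimp only
        rw [max_eq_left h]
        exact hpτ i
    have hx1 : ∀ i, x i ≤ 1 := fun i =>
      le_trans (Finset.single_le_sum (fun j _ => hx j) (Finset.mem_univ i)) hsum
    have hpM : ∀ i, p i ≤ M := by
      intro i
      refine le_trans (le_min (hpB' i) ?_) (hMtop i)
      rw [le_div_iff₀ (hτ i)]
      calc p i * τ i ≤ x i * v i := hpτ' i
        _ ≤ 1 * v i := mul_le_mul_of_nonneg_right (hx1 i) (hv i)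
        _ = v i := one_mul _
    set D := ∑ i, p i with hDdef
    have hD1 : K - ε₀ < D :=
      lt_of_lt_of_le htgt (Finset.sum_le_sum fun i _ => le_max_left _ _)
    have hD2 : D ≤ K := le_csSup (feas_bddAbove _)
      ⟨x, p, hx, by simp, hsum, hpB', hpτ', rfl⟩
    have hDpos : 0 < D := by linarith
    set g : Finset (Fin n) → ℝ := fun S => ∑ i ∈ S, p i with hgdef
    have hvar : ∑ S : Finset (Fin n), (g S - D / 2) ^ 2 = 2 ^ n * (∑ i, (p i) ^ 2) / 4 := by
      have h := var_eq p Finset.univ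
      rw [Finset.powerset_univ, Finset.card_univ, Fintype.card_fin] at h
      exact h
    have hsq : (∑ i, (p i) ^ 2) ≤ M * D := by
      rw [hDdef, Finset.mul_sum]
      exact Finset.sum_le_sum fun i _ => by nlinarith [hp0 i, hpM i]
    set Good := Finset.univ.filter (fun S : Finset (Fin n) => D / 3 ≤ g S ∧ g S ≤ 2 * D / 3)
      with hGooddef
    set Bad := Finset.univ.filter (fun S : Finset (Fin n) => ¬(D / 3 ≤ g S ∧ g S ≤ 2 * D / 3))
      with hBaddef
    have hGB : (Good.card : ℝ) + (Bad.card : ℝ) = 2 ^ n := by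
      have h := Finset.card_filter_add_card_filter_not
        (s := (Finset.univ : Finset (Finset (Fin n))))
        (p := fun S => D / 3 ≤ g S ∧ g S ≤ 2 * D / 3)
      rw [Finset.card_univ, Fintype.card_finset, Fintype.card_fin] at h
      rw [hGooddef, hBaddef]
      exact_mod_cast congrArg (fun m : ℕ => (m : ℝ)) h
    have hbad : (Bad.card : ℝ) * (D / 6) ^ 2 ≤ 2 ^ n * (M * D) / 4 := by
      calc (Bad.card : ℝ) * (D / 6) ^ 2 = ∑ _S ∈ Bad, (D / 6) ^ 2 := by
            rw [Finset.sum_const, nsmul_eq_mul]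
        _ ≤ ∑ S ∈ Bad, (g S - D / 2) ^ 2 := by
            refine Finset.sum_le_sum fun S hS => ?_
            have h := (Finset.mem_filter.mp hS).2
            rw [not_and_or, not_le, not_le] at h
            rcases h with h | h <;> nlinarith
        _ ≤ ∑ S : Finset (Fin n), (g S - D / 2) ^ 2 :=
            Finset.sum_le_sum_of_subset_of_nonneg (Finset.filter_subset _ _)
              (fun S _ _ => sq_nonneg _)
        _ = 2 ^ n * (∑ i, (p i) ^ 2) / 4 := hvar
        _ ≤ 2 ^ n * (M * D) / 4 := by nlinarith
    have hrev : ∀ S ∈ Good, K / 12 - ε₀ / 3 ≤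
        sellRev n v B τ (optRev n v B τ S / 4) ((Finset.univ \ S).sort (· ≤ ·)) 1 := by
      intro S hS
      obtain ⟨hg1, hg2⟩ := (Finset.mem_filter.mp hS).2
      have htS : g S ≤ optRev n v B τ S :=
        restrict_le_optRev hB hv x p hx hp0 hsum hpB' hpτ' S
      set r := optRev n v B τ S / 4 with hrdef
      have hr1 : D / 12 ≤ r := by rw [hrdef]; linarith
      have hrpos : 0 < r := lt_of_lt_of_le (by linarith) hr1
      have hrK : r ≤ K / 4 := by
        have h := optRev_le_univ (v := v) (τ := τ) hB S
        rw [← hKdef] at h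
        rw [hrdef]
        linarith
      have hsd : (∑ i ∈ Finset.univ \ S, p i) + ∑ i ∈ S, p i = D :=
        Finset.sum_sdiff (Finset.subset_univ S)
      have hres := optRev_le_reserve (v := v) hB hτ (Finset.univ \ S) r hrpos.le
      have hresGe : (∑ i ∈ Finset.univ \ S, p i) ≤ optRev n v B τ (Finset.univ \ S) :=
        restrict_le_optRev hB hv x p hx hp0 hsum hpB' hpτ' _
      have hlist := sellRev_ge (v := v) (B := B) (τ := τ) r hrpos hB
        ((Finset.univ \ S).sort (· ≤ ·)) 1 zero_le_one
      rw [sort_map_sum] at hlist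
      refine le_trans (le_min ?_ ?_) hlist
      · rw [mul_one]; linarith
      · linarith
    have hTbound : (Good.card : ℝ) * (K / 12 - ε₀ / 3) ≤ T := by
      calc (Good.card : ℝ) * (K / 12 - ε₀ / 3) = ∑ _S ∈ Good, (K / 12 - ε₀ / 3) := by
            rw [Finset.sum_const, nsmul_eq_mul]
        _ ≤ ∑ S ∈ Good, sellRev n v B τ (optRev n v B τ S / 4)
              ((Finset.univ \ S).sort (· ≤ ·)) 1 := Finset.sum_le_sum hrev
        _ ≤ T := by
            rw [hTdef]
            refine Finset.sum_le_sum_of_subset_of_nonneg (Finset.filter_subset _ _)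
              (fun S _ _ => ?_)
            exact sellRev_nonneg _ (div_nonneg (optRev_nonneg hB S) (by norm_num)) (fun i => (hB i).le)
              _ 1 zero_le_one
    have hfin2 : K / 16 - 13 * ε / 4 ≤ T / ((2:ℝ) ^ n) := by
      refine num_final K ε ε₀ D M ((2:ℝ)^n) (Good.card : ℝ) (Bad.card : ℝ) T
        hKpos hε hε₀pos hε₀ε hε₀K hD1.le hD2 (le_trans (hp0 ⟨0, hn⟩) (hpM ⟨0, hn⟩))
        hcase.le hN (Nat.cast_nonneg _) hGB hbad hTbound
    have hrw : 4 / 13 * T / ((2:ℝ) ^ n) = 4 / 13 * (T / ((2:ℝ) ^ n)) := by ring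
    rw [hrw]
    linarith
end
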